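/- arXiv:1406.0238 — 4 statements merged into one kernel-verified Lean document; each statement's English description precedes it below -/
import Mathlib

section
/- Let $\hat{Z} = \cup_{c=1}^C \hat{Z}^{(c)}$ be a $(C,\tau)$-distributed sampling over a balanced partition $P^{(1)},\dots,P^{(C)}$ of $[n]$ into sets of size $s = n/C$. Pick $J \subseteq [n]$ with $|P^{(c)} \cap J| = \xi$ for some $\xi \geq 1$ and all $c$. Let $\kappa(m, i)$ be any real-valued function of an integer $m$ and index $i \in [n]$. Then $\mathbb{E}\left[\sum_{i \in \hat{Z} \cap J} \kappa(|\hat{Z} \cap J|, i)\right] = \mathbb{E}\left[\frac{|\hat{Z} \cap J|}{C\xi} \sum_{i \in J} \kappa(|\hat{Z} \cap J|, i)\right]$. -/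
open Finset

section DistAux

variable {n C τ : ℕ} {P : Fin C → Finset (Fin n)} {J : Finset (Fin n)}

private lemma mem_image_invol (f : Fin n → Fin n) (hf : Function.Involutive f)
    (S : Finset (Fin n)) (x : Fin n) : x ∈ S.image f ↔ f x ∈ S := by
  constructor
  · intro h
    rcases Finset.mem_image.1 h with ⟨y, hy, rfl⟩
    rwa [hf y]
  · intro h
    exact Finset.mem_image.2 ⟨f x, h, hf x⟩

private lemma image_inter_J (f : Fin n → Fin n) (hf : Function.Involutive f)
    (hfJ : ∀ x, x ∈ J ↔ f x ∈ J) (S : Finset (Fin n)) :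
    (S.image f) ∩ J = (S ∩ J).image f := by
  ext x
  simp only [Finset.mem_inter, Finset.mem_image]
  constructor
  · rintro ⟨⟨y, hy, rfl⟩, hxJ⟩
    exact ⟨y, ⟨hy, (hfJ y).2 hxJ⟩, rfl⟩
  · rintro ⟨y, ⟨hy, hyJ⟩, rfl⟩
    exact ⟨⟨y, hy, rfl⟩, (hfJ y).1 hyJ⟩

private lemma card_image_inter_J (f : Fin n → Fin n) (hf : Function.Involutive f)
    (hfJ : ∀ x, x ∈ J ↔ f x ∈ J) (S : Finset (Fin n)) :
    ((S.image f) ∩ J).card = (S ∩ J).card := by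
  rw [image_inter_J f hf hfJ, Finset.card_image_of_injective _ hf.injective]

private lemma m_phi (f : Fin n → Fin n) (hf : Function.Involutive f)
    (hfJ : ∀ x, x ∈ J ↔ f x ∈ J)
    (π : Fin C → Fin C) (hπ : Function.Bijective π)
    (Z : Fin C → Finset (Fin n)) :
    ((Finset.univ.biUnion fun d => (Z (π d)).image f) ∩ J).card
      = ((Finset.univ.biUnion Z) ∩ J).card := by
  have h1 : (Finset.univ.biUnion fun d => (Z (π d)).image f)
      = ((Finset.univ.biUnion Z).image f) := by
    ext x
    simp only [Finset.mem_biUnion, Finset.mem_univ, true_and, Finset.mem_image]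
    constructor
    · rintro ⟨d, y, hy, rfl⟩
      exact ⟨y, ⟨π d, hy⟩, rfl⟩
    · rintro ⟨y, ⟨d, hy⟩, rfl⟩
      obtain ⟨d', rfl⟩ := hπ.surjective d
      exact ⟨d', y, hy, rfl⟩
  rw [h1, card_image_inter_J f hf hfJ]

private lemma sum_reindex
    (f : Fin n → Fin n) (hf : Function.Involutive f)
    (π : Fin C → Fin C) (hπ : Function.Involutive π)
    (hfP : ∀ d, ∀ x ∈ P d, f x ∈ P (π d))
    (F G : (Fin C → Finset (Fin n)) → ℝ)
    (hFG : ∀ Z ∈ Fintype.piFinset (fun c => (P c).powersetCard τ),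
        F Z = G (fun d => (Z (π d)).image f)) :
    ∑ Z ∈ Fintype.piFinset (fun c => (P c).powersetCard τ), F Z
      = ∑ Z ∈ Fintype.piFinset (fun c => (P c).powersetCard τ), G Z := by
  have hmem : ∀ Z ∈ Fintype.piFinset (fun c => (P c).powersetCard τ),
      (fun d => (Z (π d)).image f) ∈ Fintype.piFinset (fun c => (P c).powersetCard τ) := by
    intro Z hZ
    rw [Fintype.mem_piFinset] at hZ ⊢
    intro d
    rcases Finset.mem_powersetCard.1 (hZ (π d)) with ⟨hsub, hcard⟩
    refine Finset.mem_powersetCard.2 ⟨?_, ?_⟩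
    · intro x hx
      rcases Finset.mem_image.1 hx with ⟨y, hy, rfl⟩
      have h := hfP (π d) y (hsub hy)
      rwa [hπ d] at h
    · rw [Finset.card_image_of_injective _ hf.injective, hcard]
  have hinv : ∀ Z : Fin C → Finset (Fin n),
      (fun d => (((fun d => (Z (π d)).image f)) (π d)).image f) = Z := by
    intro Z
    funext d
    simp only
    rw [hπ d, Finset.image_image, hf.comp_self, Finset.image_id]
  exact Finset.sum_nbij' (fun Z => fun d => (Z (π d)).image f)
    (fun Z => fun d => (Z (π d)).image f) hmem hmem
    (fun Z _ => hinv Z) (fun Z _ => hinv Z) hFG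

private lemma part_unique (hdisj : ∀ c c' : Fin C, c ≠ c' → Disjoint (P c) (P c'))
    {d d' : Fin C} {x : Fin n} (h : x ∈ P d) (h' : x ∈ P d') : d = d' := by
  by_contra hne
  exact Finset.disjoint_left.1 (hdisj d d' hne) h h'

/-- Within-part symmetry: the indicator of `j ∈ Z c` can be exchanged for `j' ∈ Z c`
when `j, j' ∈ P c ∩ J`. -/
private lemma within_part (hdisj : ∀ c c' : Fin C, c ≠ c' → Disjoint (P c) (P c'))
    (c : Fin C) (j j' : Fin n) (hj : j ∈ P c ∩ J) (hj' : j' ∈ P c ∩ J)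
    (g : ℕ → ℝ) :
    ∑ Z ∈ Fintype.piFinset (fun c => (P c).powersetCard τ),
        (if j ∈ Z c then g ((Finset.univ.biUnion Z ∩ J).card) else 0)
      = ∑ Z ∈ Fintype.piFinset (fun c => (P c).powersetCard τ),
        (if j' ∈ Z c then g ((Finset.univ.biUnion Z ∩ J).card) else 0) := by
  classical
  rcases Finset.mem_inter.1 hj with ⟨hjP, hjJ⟩
  rcases Finset.mem_inter.1 hj' with ⟨hj'P, hj'J⟩
  set f : Fin n → Fin n := ⇑(Equiv.swap j j') with hfdef
  have hf : Function.Involutive f := fun x => Equiv.swap_apply_self j j' x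
  have hfJ : ∀ x, x ∈ J ↔ f x ∈ J := by
    intro x
    rcases eq_or_ne x j with rfl | hxj
    · simp only [hfdef, Equiv.swap_apply_left]
      exact iff_of_true hjJ hj'J
    rcases eq_or_ne x j' with rfl | hxj'
    · simp only [hfdef, Equiv.swap_apply_right]
      exact iff_of_true hj'J hjJ
    · rw [hfdef]; rw [Equiv.swap_apply_of_ne_of_ne hxj hxj']
  have hfP : ∀ d, ∀ x ∈ P d, f x ∈ P (id d) := by
    intro d x hx
    rcases eq_or_ne x j with rfl | hxj
    · have : d = c := part_unique hdisj hx hjP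
      subst this
      simp only [hfdef, Equiv.swap_apply_left, id]
      exact hj'P
    rcases eq_or_ne x j' with rfl | hxj'
    · have : d = c := part_unique hdisj hx hj'P
      subst this
      simp only [hfdef, Equiv.swap_apply_right, id]
      exact hjP
    · rw [hfdef]; rw [Equiv.swap_apply_of_ne_of_ne hxj hxj']; exact hx
  refine sum_reindex f hf id (fun d => rfl) hfP _ _ ?_
  intro Z hZ
  simp only [id]
  have hmZ := m_phi f hf hfJ id Function.bijective_id Z
  simp only [id_eq] at hmZ
  rw [hmZ]
  have hmem : j' ∈ (Z c).image f ↔ j ∈ Z c := by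
    rw [mem_image_invol f hf]
    simp only [hfdef, Equiv.swap_apply_right]
  by_cases h : j ∈ Z c
  · rw [if_pos h, if_pos (hmem.2 h)]
  · rw [if_neg h, if_neg (fun hc => h (hmem.1 hc))]

/-- Cross-part symmetry: `|Z c ∩ J|` and `|Z c' ∩ J|` are exchangeable weights. -/
private lemma cross_part {s ξ : ℕ}
    (hdisj : ∀ c c' : Fin C, c ≠ c' → Disjoint (P c) (P c'))
    (hsize : ∀ c, (P c).card = s) (hξ : ∀ c, (P c ∩ J).card = ξ)
    (c c' : Fin C) (g : ℕ → ℝ) :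
    ∑ Z ∈ Fintype.piFinset (fun c => (P c).powersetCard τ),
        ((Z c ∩ J).card : ℝ) * g ((Finset.univ.biUnion Z ∩ J).card)
      = ∑ Z ∈ Fintype.piFinset (fun c => (P c).powersetCard τ),
        ((Z c' ∩ J).card : ℝ) * g ((Finset.univ.biUnion Z ∩ J).card) := by
  classical
  rcases eq_or_ne c c' with rfl | hne
  · rfl
  have hdcc : Disjoint (P c) (P c') := hdisj c c' hne
  have hcJ : (P c ∩ J).card = (P c' ∩ J).card := by rw [hξ, hξ]
  have hcN : (P c \ J).card = (P c' \ J).card := by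
    have h1 := Finset.card_inter_add_card_sdiff (P c) J
    have h2 := Finset.card_inter_add_card_sdiff (P c') J
    rw [hsize, hξ] at h1 h2
    omega
  set A := P c ∩ J with hA
  set A' := P c' ∩ J with hA'
  set B := P c \ J with hB
  set B' := P c' \ J with hB'
  have hAP : A ⊆ P c := Finset.inter_subset_left
  have hA'P : A' ⊆ P c' := Finset.inter_subset_left
  have hBP : B ⊆ P c := Finset.sdiff_subset
  have hB'P : B' ⊆ P c' := Finset.sdiff_subset
  let eA : {x // x ∈ A} ≃ {x // x ∈ A'} := Finset.equivOfCardEq hcJ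
  let eB : {x // x ∈ B} ≃ {x // x ∈ B'} := Finset.equivOfCardEq hcN
  set f : Fin n → Fin n := fun x =>
    if h : x ∈ A then ↑(eA ⟨x, h⟩)
    else if h : x ∈ A' then ↑(eA.symm ⟨x, h⟩)
    else if h : x ∈ B then ↑(eB ⟨x, h⟩)
    else if h : x ∈ B' then ↑(eB.symm ⟨x, h⟩)
    else x with hfdef
  -- basic disjointness of the four sets
  have hnotc' : ∀ x, x ∈ P c → x ∉ P c' := fun x hx hx' =>
    Finset.disjoint_left.1 hdcc hx hx'
  have hnotc : ∀ x, x ∈ P c' → x ∉ P c := fun x hx hx' =>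
    Finset.disjoint_left.1 hdcc hx' hx
  -- branch computation lemmas
  have hfA : ∀ x (h : x ∈ A), f x = ↑(eA ⟨x, h⟩) := fun x h => dif_pos h
  have hfA' : ∀ x (h : x ∈ A'), f x = ↑(eA.symm ⟨x, h⟩) := by
    intro x h
    have h1 : x ∉ A := fun hc => hnotc x (hA'P h) (hAP hc)
    rw [hfdef]; simp only [dif_neg h1, dif_pos h]
  have hfB : ∀ x (h : x ∈ B), f x = ↑(eB ⟨x, h⟩) := by
    intro x h
    have h1 : x ∉ A := fun hc => (Finset.mem_sdiff.1 h).2 (Finset.mem_inter.1 hc).2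
    have h2 : x ∉ A' := fun hc => hnotc' x (hBP h) (hA'P hc)
    rw [hfdef]; simp only [dif_neg h1, dif_neg h2, dif_pos h]
  have hfB' : ∀ x (h : x ∈ B'), f x = ↑(eB.symm ⟨x, h⟩) := by
    intro x h
    have h1 : x ∉ A := fun hc => hnotc x (hB'P h) (hAP hc)
    have h2 : x ∉ A' := fun hc => (Finset.mem_sdiff.1 h).2 (Finset.mem_inter.1 hc).2
    have h3 : x ∉ B := fun hc => hnotc' x (hBP hc) (hB'P h)
    rw [hfdef]; simp only [dif_neg h1, dif_neg h2, dif_neg h3, dif_pos h]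
  have hfO : ∀ x, x ∉ A → x ∉ A' → x ∉ B → x ∉ B' → f x = x := by
    intro x h1 h2 h3 h4
    rw [hfdef]; simp only [dif_neg h1, dif_neg h2, dif_neg h3, dif_neg h4]
  have hf : Function.Involutive f := by
    intro x
    by_cases h : x ∈ A
    · rw [hfA x h]
      have h2 : (↑(eA ⟨x, h⟩) : Fin n) ∈ A' := (eA ⟨x, h⟩).2
      rw [hfA' _ h2]
      have h3 : (⟨↑(eA ⟨x, h⟩), h2⟩ : {y // y ∈ A'}) = eA ⟨x, h⟩ := Subtype.ext rfl
      rw [h3, Equiv.symm_apply_apply]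
    by_cases h' : x ∈ A'
    · rw [hfA' x h']
      have h2 : (↑(eA.symm ⟨x, h'⟩) : Fin n) ∈ A := (eA.symm ⟨x, h'⟩).2
      rw [hfA _ h2]
      have h3 : (⟨↑(eA.symm ⟨x, h'⟩), h2⟩ : {y // y ∈ A}) = eA.symm ⟨x, h'⟩ := Subtype.ext rfl
      rw [h3, Equiv.apply_symm_apply]
    by_cases hb : x ∈ B
    · rw [hfB x hb]
      have h2 : (↑(eB ⟨x, hb⟩) : Fin n) ∈ B' := (eB ⟨x, hb⟩).2
      rw [hfB' _ h2]
      have h3 : (⟨↑(eB ⟨x, hb⟩), h2⟩ : {y // y ∈ B'}) = eB ⟨x, hb⟩ := Subtype.ext rfl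
      rw [h3, Equiv.symm_apply_apply]
    by_cases hb' : x ∈ B'
    · rw [hfB' x hb']
      have h2 : (↑(eB.symm ⟨x, hb'⟩) : Fin n) ∈ B := (eB.symm ⟨x, hb'⟩).2
      rw [hfB _ h2]
      have h3 : (⟨↑(eB.symm ⟨x, hb'⟩), h2⟩ : {y // y ∈ B}) = eB.symm ⟨x, hb'⟩ := Subtype.ext rfl
      rw [h3, Equiv.apply_symm_apply]
    · rw [hfO x h h' hb hb', hfO x h h' hb hb']
  have hfJ : ∀ x, x ∈ J ↔ f x ∈ J := by
    intro x
    by_cases h : x ∈ A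
    · rw [hfA x h]
      exact iff_of_true (Finset.mem_inter.1 h).2 (Finset.mem_inter.1 (eA ⟨x, h⟩).2).2
    by_cases h' : x ∈ A'
    · rw [hfA' x h']
      exact iff_of_true (Finset.mem_inter.1 h').2 (Finset.mem_inter.1 (eA.symm ⟨x, h'⟩).2).2
    by_cases hb : x ∈ B
    · rw [hfB x hb]
      exact iff_of_false (Finset.mem_sdiff.1 hb).2 (Finset.mem_sdiff.1 (eB ⟨x, hb⟩).2).2
    by_cases hb' : x ∈ B'
    · rw [hfB' x hb']
      exact iff_of_false (Finset.mem_sdiff.1 hb').2 (Finset.mem_sdiff.1 (eB.symm ⟨x, hb'⟩).2).2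
    · rw [hfO x h h' hb hb']
  set π : Fin C → Fin C := ⇑(Equiv.swap c c') with hπdef
  have hπ : Function.Involutive π := fun d => Equiv.swap_apply_self c c' d
  have hPcAB : ∀ x, x ∈ P c → x ∈ A ∨ x ∈ B := by
    intro x hx
    by_cases hxJ : x ∈ J
    · exact Or.inl (Finset.mem_inter.2 ⟨hx, hxJ⟩)
    · exact Or.inr (Finset.mem_sdiff.2 ⟨hx, hxJ⟩)
  have hPc'AB : ∀ x, x ∈ P c' → x ∈ A' ∨ x ∈ B' := by
    intro x hx
    by_cases hxJ : x ∈ J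
    · exact Or.inl (Finset.mem_inter.2 ⟨hx, hxJ⟩)
    · exact Or.inr (Finset.mem_sdiff.2 ⟨hx, hxJ⟩)
  have hfP : ∀ d, ∀ x ∈ P d, f x ∈ P (π d) := by
    intro d x hx
    by_cases h : x ∈ A
    · have hd : d = c := part_unique hdisj hx (hAP h)
      subst hd
      rw [hfA x h, hπdef]
      simp only [Equiv.swap_apply_left]
      exact hA'P (eA ⟨x, h⟩).2
    by_cases h' : x ∈ A'
    · have hd : d = c' := part_unique hdisj hx (hA'P h')
      subst hd
      rw [hfA' x h', hπdef]
      simp only [Equiv.swap_apply_right]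
      exact hAP (eA.symm ⟨x, h'⟩).2
    by_cases hb : x ∈ B
    · have hd : d = c := part_unique hdisj hx (hBP hb)
      subst hd
      rw [hfB x hb, hπdef]
      simp only [Equiv.swap_apply_left]
      exact hB'P (eB ⟨x, hb⟩).2
    by_cases hb' : x ∈ B'
    · have hd : d = c' := part_unique hdisj hx (hB'P hb')
      subst hd
      rw [hfB' x hb', hπdef]
      simp only [Equiv.swap_apply_right]
      exact hBP (eB.symm ⟨x, hb'⟩).2
    · have hdc : d ≠ c := by
        rintro rfl
        rcases hPcAB x hx with h1 | h1
        exacts [h h1, hb h1]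
      have hdc' : d ≠ c' := by
        rintro rfl
        rcases hPc'AB x hx with h1 | h1
        exacts [h' h1, hb' h1]
      rw [hfO x h h' hb hb', hπdef, Equiv.swap_apply_of_ne_of_ne hdc hdc']
      exact hx
  refine sum_reindex f hf π hπ hfP _ _ ?_
  intro Z hZ
  simp only
  rw [m_phi f hf hfJ π hπ.bijective]
  have hπc' : π c' = c := by rw [hπdef]; exact Equiv.swap_apply_right c c'
  rw [hπc', card_image_inter_J f hf hfJ]

end DistAux

/-- The key identity for `(C,τ)`-distributed samplings.  `[n]` is partitioned into `C`
balanced parts `P c` of size `s = n / C`; `Z c` is an independent uniformly random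
`τ`-subset of `P c`, and `Ẑ = ⋃ c, Z c`.  If `J ⊆ [n]` satisfies `|P c ∩ J| = ξ ≥ 1`
for all `c`, then for any function `κ` of `|Ẑ ∩ J|` and `i`:
`E[∑_{i ∈ Ẑ ∩ J} κ(|Ẑ ∩ J|, i)] = E[(|Ẑ ∩ J| / (C ξ)) ∑_{i ∈ J} κ(|Ẑ ∩ J|, i)]`. -/
theorem distributed_sampling_identity
    (n C s τ ξ : ℕ) (P : Fin C → Finset (Fin n)) (J : Finset (Fin n))
    (κ : ℕ → Fin n → ℝ)
    (hpart : Finset.univ = Finset.univ.biUnion P)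
    (hdisj : ∀ c c' : Fin C, c ≠ c' → Disjoint (P c) (P c'))
    (hsize : ∀ c, (P c).card = s) (hn : n = C * s)
    (hτ1 : 1 ≤ τ) (hτs : τ ≤ s)
    (hξ : ∀ c, (P c ∩ J).card = ξ) (hξ1 : 1 ≤ ξ) :
    (∑ Z ∈ Fintype.piFinset (fun c : Fin C => (P c).powersetCard τ),
        ∑ i ∈ (Finset.univ.biUnion Z) ∩ J, κ ((Finset.univ.biUnion Z ∩ J).card) i)
      / ((Fintype.piFinset (fun c : Fin C => (P c).powersetCard τ)).card : ℝ)
    = (∑ Z ∈ Fintype.piFinset (fun c : Fin C => (P c).powersetCard τ),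
        ((Finset.univ.biUnion Z ∩ J).card : ℝ) / ((C : ℝ) * ξ)
          * ∑ i ∈ J, κ ((Finset.univ.biUnion Z ∩ J).card) i)
      / ((Fintype.piFinset (fun c : Fin C => (P c).powersetCard τ)).card : ℝ) := by
  classical
  congr 1
  rcases Nat.eq_zero_or_pos C with hC0 | hCpos
  · subst hC0
    have hbe : ∀ Z : Fin 0 → Finset (Fin n),
        (Finset.univ : Finset (Fin 0)).biUnion Z = ∅ := fun _ => rfl
    simp only [hbe, Finset.empty_inter, Finset.card_empty, Finset.sum_empty,
      Nat.cast_zero, CharP.cast_eq_zero, zero_mul, zero_div, zero_mul,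
      Finset.sum_const_zero]
  -- C ≥ 1
  have hCξ : ((C : ℝ) * ξ) ≠ 0 := by
    have h1 : (0 : ℝ) < C := by exact_mod_cast hCpos
    have h2 : (0 : ℝ) < ξ := by exact_mod_cast hξ1
    positivity
  -- members of the sampling space
  have hZsub : ∀ Z ∈ Fintype.piFinset (fun c : Fin C => (P c).powersetCard τ),
      ∀ c, Z c ⊆ P c := by
    intro Z hZ c
    exact (Finset.mem_powersetCard.1 (Fintype.mem_piFinset.1 hZ c)).1
  -- the cardinality splits over parts
  have hmsplit : ∀ Z ∈ Fintype.piFinset (fun c : Fin C => (P c).powersetCard τ),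
      ((Finset.univ.biUnion Z) ∩ J).card = ∑ c, (Z c ∩ J).card := by
    intro Z hZ
    have h1 : (Finset.univ.biUnion Z) ∩ J = Finset.univ.biUnion fun c => Z c ∩ J := by
      ext x
      simp only [Finset.mem_inter, Finset.mem_biUnion, Finset.mem_univ, true_and]
      constructor
      · rintro ⟨⟨c, hc⟩, hJ⟩; exact ⟨c, hc, hJ⟩
      · rintro ⟨c, hc, hJ⟩; exact ⟨⟨c, hc⟩, hJ⟩
    rw [h1]
    apply Finset.card_biUnion
    intro x _ y _ hxy
    exact Finset.disjoint_of_subset_left Finset.inter_subset_left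
      (Finset.disjoint_of_subset_right Finset.inter_subset_left
        (Finset.disjoint_of_subset_left (hZsub Z hZ x)
          (Finset.disjoint_of_subset_right (hZsub Z hZ y) (hdisj x y hxy))))
  -- rewrite LHS inner sums as sums over J with indicators, then swap sum order
  have hLHS : ∑ Z ∈ Fintype.piFinset (fun c : Fin C => (P c).powersetCard τ),
        ∑ i ∈ (Finset.univ.biUnion Z) ∩ J, κ ((Finset.univ.biUnion Z ∩ J).card) i
      = ∑ i ∈ J, ∑ Z ∈ Fintype.piFinset (fun c : Fin C => (P c).powersetCard τ),
          (if i ∈ Finset.univ.biUnion Z then κ ((Finset.univ.biUnion Z ∩ J).card) i else 0) := by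
    rw [Finset.sum_comm]
    apply Finset.sum_congr rfl
    intro Z _
    have h1 : (Finset.univ.biUnion Z) ∩ J
        = J.filter (fun i => i ∈ Finset.univ.biUnion Z) := by
      rw [Finset.filter_mem_eq_inter, Finset.inter_comm]
    rw [h1, Finset.sum_filter]
  have hRHS : ∑ Z ∈ Fintype.piFinset (fun c : Fin C => (P c).powersetCard τ),
        ((Finset.univ.biUnion Z ∩ J).card : ℝ) / ((C : ℝ) * ξ)
          * ∑ i ∈ J, κ ((Finset.univ.biUnion Z ∩ J).card) i
      = ∑ i ∈ J, ∑ Z ∈ Fintype.piFinset (fun c : Fin C => (P c).powersetCard τ),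
          ((Finset.univ.biUnion Z ∩ J).card : ℝ) / ((C : ℝ) * ξ)
            * κ ((Finset.univ.biUnion Z ∩ J).card) i := by
    rw [Finset.sum_comm]
    apply Finset.sum_congr rfl
    intro Z _
    rw [Finset.mul_sum]
  rw [hLHS, hRHS]
  apply Finset.sum_congr rfl
  intro i hiJ
  -- find the part containing i
  have hiu : i ∈ Finset.univ.biUnion P := by rw [← hpart]; exact Finset.mem_univ i
  rcases Finset.mem_biUnion.1 hiu with ⟨c, -, hiPc⟩
  set g : ℕ → ℝ := fun m => κ m i with hg
  -- Step 1: indicator of membership in the union is membership in Z c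
  have hstep1 : ∑ Z ∈ Fintype.piFinset (fun c : Fin C => (P c).powersetCard τ),
        (if i ∈ Finset.univ.biUnion Z then κ ((Finset.univ.biUnion Z ∩ J).card) i else 0)
      = ∑ Z ∈ Fintype.piFinset (fun c : Fin C => (P c).powersetCard τ),
        (if i ∈ Z c then g ((Finset.univ.biUnion Z ∩ J).card) else 0) := by
    apply Finset.sum_congr rfl
    intro Z hZ
    have hiff : i ∈ Finset.univ.biUnion Z ↔ i ∈ Z c := by
      constructor
      · intro h
        rcases Finset.mem_biUnion.1 h with ⟨d, -, hd⟩
        have : d = c := part_unique hdisj (hZsub Z hZ d hd) hiPc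
        rwa [← this]
      · intro h
        exact Finset.mem_biUnion.2 ⟨c, Finset.mem_univ c, h⟩
    by_cases h : i ∈ Z c
    · rw [if_pos (hiff.2 h), if_pos h]
    · rw [if_neg (fun hc => h (hiff.1 hc)), if_neg h]
  rw [hstep1]
  -- Step 2: the weighted sum over all parts equals C copies of part c
  have hcross : ∀ d : Fin C,
      ∑ Z ∈ Fintype.piFinset (fun c : Fin C => (P c).powersetCard τ),
          ((Z d ∩ J).card : ℝ) * g ((Finset.univ.biUnion Z ∩ J).card)
        = ∑ Z ∈ Fintype.piFinset (fun c : Fin C => (P c).powersetCard τ),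
          ((Z c ∩ J).card : ℝ) * g ((Finset.univ.biUnion Z ∩ J).card) :=
    fun d => cross_part hdisj hsize hξ d c g
  have hic : i ∈ P c ∩ J := Finset.mem_inter.2 ⟨hiPc, hiJ⟩
  -- Step 3: within part c, the weight |Z c ∩ J| averages to ξ times the indicator at i
  have hstep3 : ∑ Z ∈ Fintype.piFinset (fun c : Fin C => (P c).powersetCard τ),
        ((Z c ∩ J).card : ℝ) * g ((Finset.univ.biUnion Z ∩ J).card)
      = (ξ : ℝ) * ∑ Z ∈ Fintype.piFinset (fun c : Fin C => (P c).powersetCard τ),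
          (if i ∈ Z c then g ((Finset.univ.biUnion Z ∩ J).card) else 0) := by
    have h1 : ∀ Z ∈ Fintype.piFinset (fun c : Fin C => (P c).powersetCard τ),
        ((Z c ∩ J).card : ℝ) * g ((Finset.univ.biUnion Z ∩ J).card)
          = ∑ j ∈ P c ∩ J, (if j ∈ Z c then g ((Finset.univ.biUnion Z ∩ J).card) else 0) := by
      intro Z hZ
      have h2 : Z c ∩ J = (P c ∩ J).filter (fun j => j ∈ Z c) := by
        ext x
        simp only [Finset.mem_inter, Finset.mem_filter]
        constructor
        · rintro ⟨h3, h4⟩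
          exact ⟨⟨hZsub Z hZ c h3, h4⟩, h3⟩
        · rintro ⟨⟨-, h4⟩, h3⟩
          exact ⟨h3, h4⟩
      rw [h2, ← Finset.sum_filter, Finset.sum_const, nsmul_eq_mul]
    rw [Finset.sum_congr rfl h1, Finset.sum_comm]
    have h5 : ∀ j ∈ P c ∩ J,
        ∑ Z ∈ Fintype.piFinset (fun c : Fin C => (P c).powersetCard τ),
          (if j ∈ Z c then g ((Finset.univ.biUnion Z ∩ J).card) else 0)
        = ∑ Z ∈ Fintype.piFinset (fun c : Fin C => (P c).powersetCard τ),
          (if i ∈ Z c then g ((Finset.univ.biUnion Z ∩ J).card) else 0) := by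
      intro j hj
      exact within_part hdisj c j i hj hic g
    rw [Finset.sum_congr rfl h5, Finset.sum_const, hξ c, nsmul_eq_mul]
  -- now assemble the right-hand side per i
  have hm : ∀ Z ∈ Fintype.piFinset (fun c : Fin C => (P c).powersetCard τ),
      ((Finset.univ.biUnion Z ∩ J).card : ℝ) = ∑ d, ((Z d ∩ J).card : ℝ) := by
    intro Z hZ
    rw [hmsplit Z hZ]
    push_cast
    rfl
  have hRHSi : ∑ Z ∈ Fintype.piFinset (fun c : Fin C => (P c).powersetCard τ),
        ((Finset.univ.biUnion Z ∩ J).card : ℝ) / ((C : ℝ) * ξ)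
          * κ ((Finset.univ.biUnion Z ∩ J).card) i
      = ((C : ℝ) * ξ)⁻¹ * ∑ d : Fin C,
          ∑ Z ∈ Fintype.piFinset (fun c : Fin C => (P c).powersetCard τ),
            ((Z d ∩ J).card : ℝ) * g ((Finset.univ.biUnion Z ∩ J).card) := by
    have hswap : (∑ d : Fin C, ∑ Z ∈ Fintype.piFinset (fun c : Fin C => (P c).powersetCard τ),
          ((Z d ∩ J).card : ℝ) * g ((Finset.univ.biUnion Z ∩ J).card))
        = ∑ Z ∈ Fintype.piFinset (fun c : Fin C => (P c).powersetCard τ),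
          ∑ d : Fin C, ((Z d ∩ J).card : ℝ) * g ((Finset.univ.biUnion Z ∩ J).card) :=
      Finset.sum_comm
    rw [hswap, Finset.mul_sum]
    apply Finset.sum_congr rfl
    intro Z hZ
    rw [← Finset.sum_mul, ← hm Z hZ, hg]
    ring
  rw [hRHSi, Finset.sum_congr rfl (fun d _ => hcross d), Finset.sum_const, hstep3,
    Finset.card_univ, Fintype.card_fin, nsmul_eq_mul]
  have h9 : ((C : ℝ) * ξ)⁻¹ * (C : ℝ) * (ξ : ℝ) = 1 := by
    rw [mul_assoc, inv_mul_cancel₀ hCξ]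
  rw [← mul_assoc, ← mul_assoc, h9, one_mul]
end

section
/- Let $\phi: \mathbb{R}^N \to \mathbb{R}$ be convex with $\phi(0) = 0$ and $\phi \geq 0$, and suppose $\phi(U_i t) \leq \frac{L_i}{2}\|t\|_{(i)}^2$ for all $i \in [n]$ and $t \in \mathbb{R}^{N_i}$. If $\phi$ depends only on blocks in $J \subseteq [n]$, and $\hat{Z}$ is a $(C,\tau)$-distributed sampling with $|P^{(c)} \cap J| = \xi \geq 1$ for all $c$, then $\mathbb{E}[\phi(h_{[\hat{Z}]})] \leq \frac{1}{2C\xi}\,\mathbb{E}[|\hat{Z} \cap J|^2]\, \|h\|_L^2$ for all $h \in \mathbb{R}^N$, where $\|h\|_L^2 = \sum_i L_i \|h^{(i)}\|_{(i)}^2$. -/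
open Finset

lemma eso_aux_zero {α : Type*} [DecidableEq α] (S : Finset α) (x : α) :
    ((S.powersetCard 0).filter (fun T => x ∈ T)).card = 0 := by
  rw [Finset.card_eq_zero, Finset.filter_eq_empty_iff]
  intro T hT
  rw [mem_powersetCard] at hT
  rw [Finset.card_eq_zero.mp hT.2]
  exact notMem_empty x

/-- τ-subsets of `A` containing `i` biject with (τ-1)-subsets of `A.erase i`. -/
lemma eso_aux_card_filter_mem {α : Type*} [DecidableEq α] (A : Finset α) (i : α)
    (hi : i ∈ A) (r : ℕ) :
    ((A.powersetCard (r+1)).filter (fun T => i ∈ T)).card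
      = (((A.erase i)).powersetCard r).card := by
  refine Finset.card_bij' (fun T _ => T.erase i) (fun S _ => insert i S) ?_ ?_ ?_ ?_
  · intro T hT
    simp only [mem_filter, mem_powersetCard] at hT
    obtain ⟨⟨hsub, hcard⟩, hiT⟩ := hT
    rw [mem_powersetCard]
    constructor
    · intro x hx
      rw [mem_erase] at hx ⊢
      exact ⟨hx.1, hsub hx.2⟩
    · rw [card_erase_of_mem hiT, hcard]; rfl
  · intro S hS
    rw [mem_powersetCard] at hS
    obtain ⟨hsub, hcard⟩ := hS
    have hiS : i ∉ S := fun h => (mem_erase.mp (hsub h)).1 rfl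
    simp only [mem_filter, mem_powersetCard]
    refine ⟨⟨?_, ?_⟩, mem_insert_self _ _⟩
    · intro x hx
      rcases mem_insert.mp hx with rfl | hx
      · exact hi
      · exact (mem_erase.mp (hsub hx)).2
    · rw [card_insert_of_notMem hiS, hcard]
  · intro T hT
    simp only [mem_filter] at hT
    exact insert_erase hT.2
  · intro S hS
    rw [mem_powersetCard] at hS
    have hiS : i ∉ S := fun h => (mem_erase.mp (hS.1 h)).1 rfl
    exact erase_insert hiS

/-- same, with an extra membership condition `j ∈ T`, `j ≠ i`. -/
lemma eso_aux_card_filter_mem2 {α : Type*} [DecidableEq α] (A : Finset α) (i j : α)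
    (hi : i ∈ A) (hij : j ≠ i) (r : ℕ) :
    ((A.powersetCard (r+1)).filter (fun T => i ∈ T ∧ j ∈ T)).card
      = ((((A.erase i)).powersetCard r).filter (fun T => j ∈ T)).card := by
  refine Finset.card_bij' (fun T _ => T.erase i) (fun S _ => insert i S) ?_ ?_ ?_ ?_
  · intro T hT
    simp only [mem_filter, mem_powersetCard] at hT
    obtain ⟨⟨hsub, hcard⟩, hiT, hjT⟩ := hT
    simp only [mem_filter, mem_powersetCard]
    refine ⟨⟨?_, ?_⟩, mem_erase.mpr ⟨hij, hjT⟩⟩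
    · intro x hx
      rw [mem_erase] at hx ⊢
      exact ⟨hx.1, hsub hx.2⟩
    · rw [card_erase_of_mem hiT, hcard]; rfl
  · intro S hS
    simp only [mem_filter, mem_powersetCard] at hS
    obtain ⟨⟨hsub, hcard⟩, hjS⟩ := hS
    have hiS : i ∉ S := fun h => (mem_erase.mp (hsub h)).1 rfl
    simp only [mem_filter, mem_powersetCard]
    refine ⟨⟨?_, ?_⟩, mem_insert_self _ _, mem_insert_of_mem hjS⟩
    · intro x hx
      rcases mem_insert.mp hx with rfl | hx
      · exact hi
      · exact (mem_erase.mp (hsub hx)).2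
    · rw [card_insert_of_notMem hiS, hcard]
  · intro T hT
    simp only [mem_filter] at hT
    exact insert_erase hT.2.1
  · intro S hS
    simp only [mem_filter, mem_powersetCard] at hS
    have hiS : i ∉ S := fun h => (mem_erase.mp (hS.1.1 h)).1 rfl
    exact erase_insert hiS

lemma eso_aux_cnt1 {α : Type*} [DecidableEq α] (A : Finset α) (i : α)
    (hi : i ∈ A) (r : ℕ) :
    ((A.powersetCard (r+1)).filter (fun T => i ∈ T)).card = (A.card - 1).choose r := by
  rw [eso_aux_card_filter_mem A i hi r, card_powersetCard, card_erase_of_mem hi]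

/-- invariance of the one-point count: depends only on `|A|`, `r`. -/
lemma eso_aux_cnt_inv {α β : Type*} [DecidableEq α] [DecidableEq β]
    (A : Finset α) (B : Finset β) (i : α) (j : β) (hi : i ∈ A) (hj : j ∈ B)
    (hcard : A.card = B.card) (r : ℕ) :
    ((A.powersetCard r).filter (fun T => i ∈ T)).card
      = ((B.powersetCard r).filter (fun T => j ∈ T)).card := by
  cases r with
  | zero => rw [eso_aux_zero, eso_aux_zero]
  | succ r => rw [eso_aux_cnt1 A i hi r, eso_aux_cnt1 B j hj r, hcard]



set_option maxHeartbeats 1000000 in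


/-- Key estimate in the ESO proof.  Let `φ` be convex with `φ(0) = 0`, `φ ≥ 0`, and
`φ(U_i t) ≤ (L i / 2) ‖t‖²` for every block vector `t` (blocks live in `ℝ^(d i)`,
`U_i t = Function.update 0 i t`).  If `φ` depends only on the blocks in `J` and `Ẑ` is a
`(C,τ)`-distributed sampling over a balanced partition `P` of the `n` blocks with
`|P c ∩ J| = ξ ≥ 1` for all `c`, then
`E[φ(h_[Ẑ])] ≤ (1 / (2 C ξ)) E[|Ẑ ∩ J|²] ‖h‖_L²` with `‖h‖_L² = ∑ i, L i ‖h i‖²`. -/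
theorem eso_key_estimate
    (n C s τ ξ : ℕ) (d : Fin n → ℕ) (L : Fin n → ℝ)
    (φ : (∀ i : Fin n, EuclideanSpace ℝ (Fin (d i))) → ℝ)
    (hconv : ConvexOn ℝ Set.univ φ) (hφ0 : φ 0 = 0) (hφnn : ∀ x, 0 ≤ φ x)
    (hquad : ∀ (i : Fin n) (t : EuclideanSpace ℝ (Fin (d i))),
      φ (Function.update (fun _ => 0) i t) ≤ L i / 2 * ‖t‖ ^ 2)
    (J : Finset (Fin n))
    (hdep : ∀ x y, (∀ i ∈ J, x i = y i) → φ x = φ y)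
    (P : Fin C → Finset (Fin n))
    (hpart : Finset.univ = Finset.univ.biUnion P)
    (hdisj : ∀ c c' : Fin C, c ≠ c' → Disjoint (P c) (P c'))
    (hsize : ∀ c, (P c).card = s) (hn : n = C * s)
    (hτ1 : 1 ≤ τ) (hτs : τ ≤ s)
    (hξ : ∀ c, (P c ∩ J).card = ξ) (hξ1 : 1 ≤ ξ) :
    ∀ h : ∀ i : Fin n, EuclideanSpace ℝ (Fin (d i)),
      (∑ Z ∈ Fintype.piFinset (fun c : Fin C => (P c).powersetCard τ),
          φ (fun i => if i ∈ Finset.univ.biUnion Z then h i else 0))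
        / ((Fintype.piFinset (fun c : Fin C => (P c).powersetCard τ)).card : ℝ)
      ≤ 1 / (2 * (C : ℝ) * ξ)
        * ((∑ Z ∈ Fintype.piFinset (fun c : Fin C => (P c).powersetCard τ),
              (((Finset.univ.biUnion Z ∩ J).card : ℝ)) ^ 2)
            / ((Fintype.piFinset (fun c : Fin C => (P c).powersetCard τ)).card : ℝ))
        * ∑ i : Fin n, L i * ‖h i‖ ^ 2 := by
  intro h
  classical
  -- nonnegativity of the weights
  have ha : ∀ i : Fin n, 0 ≤ L i * ‖h i‖ ^ 2 := by
    intro i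
    rcases eq_or_ne (‖h i‖) 0 with h0 | h0
    · rw [h0]; simp
    · have h1 := hquad i (h i)
      have h2 := hφnn (Function.update (fun _ => 0) i (h i))
      have h3 : 0 < ‖h i‖ ^ 2 := by positivity
      nlinarith
  -- trivial case C = 0
  rcases Nat.eq_zero_or_pos C with hC | hCpos
  · subst hC
    have hn0 : n = 0 := by simpa using hn
    have hempty : IsEmpty (Fin n) := by rw [hn0]; infer_instance
    have harg : ∀ Z : Fin 0 → Finset (Fin n),
        (fun i => if i ∈ Finset.univ.biUnion Z then h i else 0)
          = (0 : ∀ i : Fin n, EuclideanSpace ℝ (Fin (d i))) := by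
      intro Z; funext i; exact hempty.elim i
    have hsum0 : (∑ Z ∈ Fintype.piFinset (fun c : Fin 0 => (P c).powersetCard τ),
        φ (fun i => if i ∈ Finset.univ.biUnion Z then h i else 0)) = 0 := by
      rw [Finset.sum_congr rfl (fun Z _ => by rw [harg Z, hφ0])]
      simp
    rw [hsum0]
    simp
  -- main case
  obtain ⟨t, rfl⟩ : ∃ t, τ = t + 1 := ⟨τ - 1, (Nat.succ_pred_eq_of_pos hτ1).symm⟩
  set Ω := Fintype.piFinset (fun c : Fin C => (P c).powersetCard (t+1)) with hΩdef
  -- part function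
  have hex : ∀ i : Fin n, ∃ c, i ∈ P c := by
    intro i
    have h1 : i ∈ Finset.univ.biUnion P := hpart ▸ Finset.mem_univ i
    simpa [Finset.mem_biUnion] using h1
  choose pt hpt using hex
  have hptu : ∀ (i : Fin n) (c : Fin C), i ∈ P c → c = pt i := by
    intro i c hc
    by_contra hne
    exact Finset.disjoint_left.mp (hdisj c (pt i) hne) hc (hpt i)
  have hmemB : ∀ Z ∈ Ω, ∀ i : Fin n,
      (i ∈ Finset.univ.biUnion Z ↔ i ∈ Z (pt i)) := by
    intro Z hZ i
    rw [Finset.mem_biUnion]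
    constructor
    · rintro ⟨c, -, hc⟩
      have hsub : Z c ⊆ P c :=
        (Finset.mem_powersetCard.mp ((Fintype.mem_piFinset.mp hZ) c)).1
      exact hptu i c (hsub hc) ▸ hc
    · intro hc; exact ⟨pt i, Finset.mem_univ _, hc⟩
  set F : Fin n → Fin n → Fin C → ℕ := fun i j c =>
    (((P c).powersetCard (t+1)).filter
      (fun T => (pt i = c → i ∈ T) ∧ (pt j = c → j ∈ T))).card with hFdef
  -- the constants
  set D := s.choose (t+1) with hD
  set m1 := (s-1).choose t with hm1
  set μ2 := (((Finset.range (s-1)).powersetCard t).filter (fun T => 0 ∈ T)).card with hμ2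
  set Nval := m1 * D^(C-1) + (ξ-1) * (μ2 * D^(C-1)) + (C-1) * (ξ * (m1 * (m1 * D^(C-2)))) with hNval
  -- Step A : pointwise convexity bound
  have stepA : ∀ B : Finset (Fin n),
      φ (fun i => if i ∈ B then h i else 0)
        ≤ ((B ∩ J).card : ℝ) / 2 * ∑ i ∈ B ∩ J, L i * ‖h i‖ ^ 2 := by
    intro B
    set S := B ∩ J with hS
    have hdep1 : φ (fun i => if i ∈ B then h i else 0)
        = φ (fun i => if i ∈ S then h i else 0) := by
      apply hdep
      intro i hi
      simp [hS, Finset.mem_inter, hi]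
    rw [hdep1]
    rcases Nat.eq_zero_or_pos S.card with hK | hK
    · have hSe : S = ∅ := Finset.card_eq_zero.mp hK
      rw [hSe]
      have he : (fun i => if i ∈ (∅ : Finset (Fin n)) then h i else 0)
          = (0 : ∀ i : Fin n, EuclideanSpace ℝ (Fin (d i))) := by
        funext i; simp
      rw [he, hφ0]
      simp
    · set K := S.card with hKdef
      have hK0 : (K:ℝ) ≠ 0 := by positivity
      set u : (i : Fin n) → (∀ j : Fin n, EuclideanSpace ℝ (Fin (d j))) :=
        fun i => Function.update (fun _ => 0) i (h i) with hu
      have claim1 : (fun j => if j ∈ S then h j else 0) = ∑ i ∈ S, u i := by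
        funext j
        rw [Finset.sum_apply]
        by_cases hj : j ∈ S
        · rw [if_pos hj, Finset.sum_eq_single_of_mem j hj (fun i _ hij => by
            simp [hu, Function.update_of_ne (Ne.symm hij)])]
          simp [hu]
        · rw [if_neg hj]
          symm
          apply Finset.sum_eq_zero
          intro i hi
          have hij : j ≠ i := fun e => hj (e ▸ hi)
          simp [hu, Function.update_of_ne hij]
      have claim2 : ∀ i : Fin n, (K:ℝ) • u i
          = Function.update (fun _ => 0) i ((K:ℝ) • h i) := by
        intro i
        funext j
        by_cases hj : j = i
        · subst hj
          simp [hu]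
        · simp [hu, Function.update_of_ne hj]
      have hsum1 : ∑ i ∈ S, (1/(K:ℝ)) = 1 := by
        rw [Finset.sum_const, ← hKdef, nsmul_eq_mul]
        field_simp
      have jensen := hconv.map_sum_le (t := S) (w := fun _ => 1/(K:ℝ))
        (p := fun i => (K:ℝ) • u i)
        (fun i _ => by positivity) hsum1 (fun i _ => Set.mem_univ _)
      have harg : ∑ i ∈ S, (1/(K:ℝ)) • ((K:ℝ) • u i) = ∑ i ∈ S, u i := by
        apply Finset.sum_congr rfl
        intro i _
        rw [smul_smul, one_div, inv_mul_cancel₀ hK0, one_smul]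
      rw [harg, ← claim1] at jensen
      refine le_trans jensen ?_
      have hterm : ∀ i ∈ S, (1/(K:ℝ)) • φ ((K:ℝ) • u i)
          ≤ (K:ℝ)/2 * (L i * ‖h i‖^2) := by
        intro i _
        rw [claim2 i, smul_eq_mul]
        have hq := hquad i ((K:ℝ) • h i)
        have hnorm : ‖(K:ℝ) • h i‖^2 = (K:ℝ)^2 * ‖h i‖^2 := by
          rw [norm_smul, mul_pow, Real.norm_natCast]
        rw [hnorm] at hq
        have h1 : (1/(K:ℝ)) * φ (Function.update (fun _ => 0) i ((K:ℝ) • h i))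
            ≤ (1/(K:ℝ)) * (L i / 2 * ((K:ℝ)^2 * ‖h i‖^2)) := by
          apply mul_le_mul_of_nonneg_left hq
          positivity
        refine le_trans h1 (le_of_eq ?_)
        field_simp
      refine le_trans (Finset.sum_le_sum hterm) (le_of_eq ?_)
      rw [Finset.mul_sum]

  -- Step M : factorization of the pair count
  have stepM : ∀ i j : Fin n,
      (∑ Z ∈ Ω, if (i ∈ Finset.univ.biUnion Z ∧ j ∈ Finset.univ.biUnion Z) then 1 else 0)
        = ∏ c : Fin C, F i j c := by
    intro i j
    have hfact : ∀ Z ∈ Ω,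
        (if (i ∈ Finset.univ.biUnion Z ∧ j ∈ Finset.univ.biUnion Z) then (1:ℕ) else 0)
          = ∏ c : Fin C,
              (if ((pt i = c → i ∈ Z c) ∧ (pt j = c → j ∈ Z c)) then 1 else 0) := by
      intro Z hZ
      have hiff : (i ∈ Finset.univ.biUnion Z ∧ j ∈ Finset.univ.biUnion Z)
          ↔ (∀ c ∈ Finset.univ, ((pt i = c → i ∈ Z c) ∧ (pt j = c → j ∈ Z c))) := by
        rw [hmemB Z hZ i, hmemB Z hZ j]
        constructor
        · rintro ⟨h1, h2⟩ c -
          exact ⟨fun e => e ▸ h1, fun e => e ▸ h2⟩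
        · intro hc
          exact ⟨(hc (pt i) (Finset.mem_univ _)).1 rfl,
            (hc (pt j) (Finset.mem_univ _)).2 rfl⟩
      rw [Finset.prod_boole]
      by_cases hA : (i ∈ Finset.univ.biUnion Z ∧ j ∈ Finset.univ.biUnion Z)
      · rw [if_pos hA, if_pos (hiff.mp hA)]
      · rw [if_neg hA, if_neg (fun hB => hA (hiff.mpr hB))]
    rw [Finset.sum_congr rfl hfact, hΩdef,
      ← Finset.prod_univ_sum (fun c : Fin C => (P c).powersetCard (t+1))
        (fun c T => if ((pt i = c → i ∈ T) ∧ (pt j = c → j ∈ T)) then 1 else 0)]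
    exact Finset.prod_congr rfl (fun c _ => (Finset.card_filter _ _).symm)

  -- values of F in the various configurations
  have hFother : ∀ (i j : Fin n) (c : Fin C), pt i ≠ c → pt j ≠ c → F i j c = D := by
    intro i j c h1 h2
    simp only [hFdef]
    rw [Finset.filter_true_of_mem
      (fun T _ => ⟨fun e => absurd e h1, fun e => absurd e h2⟩),
      Finset.card_powersetCard, hsize]
  have hFi : ∀ (i j : Fin n) (c : Fin C), pt i = c → pt j ≠ c → F i j c = m1 := by
    intro i j c h1 h2
    simp only [hFdef]
    rw [Finset.filter_congr (fun T _ =>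
      ⟨fun hp => hp.1 h1, fun hT => ⟨fun _ => hT, fun e => absurd e h2⟩⟩),
      eso_aux_cnt1 (P c) i (h1 ▸ hpt i) t, hsize]
  have hFj : ∀ (i j : Fin n) (c : Fin C), pt i ≠ c → pt j = c → F i j c = m1 := by
    intro i j c h1 h2
    simp only [hFdef]
    rw [Finset.filter_congr (fun T _ =>
      ⟨fun hp => hp.2 h2, fun hT => ⟨fun e => absurd e h1, fun _ => hT⟩⟩),
      eso_aux_cnt1 (P c) j (h2 ▸ hpt j) t, hsize]
  have hFii : ∀ i : Fin n, F i i (pt i) = m1 := by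
    intro i
    simp only [hFdef]
    have hpred : ∀ T ∈ (P (pt i)).powersetCard (t+1),
        (((True → i ∈ T) ∧ (True → i ∈ T)) ↔ i ∈ T) :=
      fun T _ => ⟨fun hp => hp.1 trivial, fun hT => ⟨fun _ => hT, fun _ => hT⟩⟩
    rw [Finset.filter_congr hpred, eso_aux_cnt1 (P (pt i)) i (hpt i) t, hsize]
  have hFij : ∀ i j : Fin n, pt j = pt i → j ≠ i → F i j (pt i) = μ2 := by
    intro i j hji hne
    have hiP : i ∈ P (pt i) := hpt i
    have hjP : j ∈ P (pt i) := hji ▸ hpt j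
    have hs2 : 2 ≤ s := by
      have h1 : 1 < (P (pt i)).card := Finset.one_lt_card.mpr ⟨i, hiP, j, hjP, (Ne.symm hne)⟩
      rw [hsize] at h1
      omega
    simp only [hFdef]
    have hpred : ∀ T ∈ (P (pt i)).powersetCard (t+1),
        (((True → i ∈ T) ∧ (pt j = pt i → j ∈ T)) ↔ (i ∈ T ∧ j ∈ T)) :=
      fun T _ => ⟨fun hp => ⟨hp.1 trivial, hp.2 hji⟩, fun hT => ⟨fun _ => hT.1, fun _ => hT.2⟩⟩
    rw [Finset.filter_congr hpred,
      eso_aux_card_filter_mem2 (P (pt i)) i j hiP hne t,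
      eso_aux_cnt_inv ((P (pt i)).erase i) (Finset.range (s-1)) j 0
        (Finset.mem_erase.mpr ⟨hne, hjP⟩) (Finset.mem_range.mpr (by omega))
        (by rw [Finset.card_erase_of_mem hiP, hsize, Finset.card_range]) t]
  -- products of F over all parts
  have hMii : ∀ i : Fin n, (∏ c : Fin C, F i i c) = m1 * D^(C-1) := by
    intro i
    rw [← Finset.mul_prod_erase Finset.univ _ (Finset.mem_univ (pt i)), hFii i]
    congr 1
    rw [Finset.prod_congr rfl (fun c hc =>
        hFother i i c (Ne.symm (Finset.mem_erase.mp hc).1) (Ne.symm (Finset.mem_erase.mp hc).1)),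
      Finset.prod_const, Finset.card_erase_of_mem (Finset.mem_univ _),
      Finset.card_univ, Fintype.card_fin]
  have hMsame : ∀ i j : Fin n, pt j = pt i → j ≠ i →
      (∏ c : Fin C, F i j c) = μ2 * D^(C-1) := by
    intro i j hji hne
    rw [← Finset.mul_prod_erase Finset.univ _ (Finset.mem_univ (pt i)), hFij i j hji hne]
    congr 1
    rw [Finset.prod_congr rfl (fun c hc =>
        hFother i j c (Ne.symm (Finset.mem_erase.mp hc).1)
          (hji ▸ Ne.symm (Finset.mem_erase.mp hc).1)),
      Finset.prod_const, Finset.card_erase_of_mem (Finset.mem_univ _),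
      Finset.card_univ, Fintype.card_fin]
  have hMcross : ∀ i j : Fin n, pt j ≠ pt i →
      (∏ c : Fin C, F i j c) = m1 * (m1 * D^(C-2)) := by
    intro i j hne
    rw [← Finset.mul_prod_erase Finset.univ _ (Finset.mem_univ (pt i)),
      hFi i j (pt i) rfl hne]
    congr 1
    have hmem : pt j ∈ Finset.univ.erase (pt i) :=
      Finset.mem_erase.mpr ⟨hne, Finset.mem_univ _⟩
    rw [← Finset.mul_prod_erase _ _ hmem, hFj i j (pt j) (Ne.symm hne) rfl]
    congr 1
    have hcard : ((Finset.univ.erase (pt i)).erase (pt j)).card = C - 2 := by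
      rw [Finset.card_erase_of_mem hmem, Finset.card_erase_of_mem (Finset.mem_univ _),
        Finset.card_univ, Fintype.card_fin]
      omega
    rw [Finset.prod_congr rfl (fun c hc => ?_), Finset.prod_const, hcard]
    have hc1 := Finset.mem_erase.mp hc
    have hc2 := Finset.mem_erase.mp hc1.2
    exact hFother i j c (Ne.symm hc2.1) (Ne.symm hc1.1)
  -- decomposition of J
  have hJdecomp : J = Finset.univ.biUnion (fun c => P c ∩ J) := by
    ext x
    simp only [Finset.mem_biUnion, Finset.mem_inter, Finset.mem_univ, true_and]
    exact ⟨fun hx => ⟨pt x, hpt x, hx⟩, fun ⟨c, _, hx⟩ => hx⟩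
  have hpd : ((Finset.univ : Finset (Fin C)) : Set (Fin C)).PairwiseDisjoint
      (fun c => P c ∩ J) := by
    intro c _ c' _ hne
    exact (hdisj c c' hne).mono Finset.inter_subset_left Finset.inter_subset_left
  have hkexp : ∀ Z : Fin C → Finset (Fin n), ((Finset.univ.biUnion Z ∩ J).card)
      = ∑ j ∈ J, (if j ∈ Finset.univ.biUnion Z then 1 else 0) := by
    intro Z
    rw [← Finset.card_filter]
    congr 1
    ext x
    simp [Finset.mem_inter, and_comm]
  -- Step C : the weighted count is constant on J
  have stepC : ∀ i ∈ J,
      (∑ Z ∈ Ω, (Finset.univ.biUnion Z ∩ J).card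
          * (if i ∈ Finset.univ.biUnion Z then 1 else 0)) = Nval := by
    intro i hiJ
    have e1 : ∀ Z ∈ Ω,
        (Finset.univ.biUnion Z ∩ J).card * (if i ∈ Finset.univ.biUnion Z then 1 else 0)
          = ∑ j ∈ J, (if (i ∈ Finset.univ.biUnion Z ∧ j ∈ Finset.univ.biUnion Z)
              then 1 else 0) := by
      intro Z _
      rw [hkexp Z, Finset.sum_mul]
      refine Finset.sum_congr rfl (fun j _ => ?_)
      by_cases h1 : i ∈ Finset.univ.biUnion Z <;> by_cases h2 : j ∈ Finset.univ.biUnion Z <;>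
        simp [h1, h2]
    rw [Finset.sum_congr rfl e1, Finset.sum_comm,
      Finset.sum_congr rfl (fun j _ => stepM i j)]
    -- decompose J into parts
    rw [hJdecomp, Finset.sum_biUnion hpd,
      ← Finset.add_sum_erase _ _ (Finset.mem_univ (pt i))]
    have hinner1 : (∑ j ∈ P (pt i) ∩ J, ∏ c : Fin C, F i j c)
        = m1 * D^(C-1) + (ξ-1) * (μ2 * D^(C-1)) := by
      have hiM : i ∈ P (pt i) ∩ J := Finset.mem_inter.mpr ⟨hpt i, hiJ⟩
      rw [← Finset.add_sum_erase _ _ hiM, hMii i]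
      congr 1
      have hval : ∀ j ∈ (P (pt i) ∩ J).erase i,
          (∏ c : Fin C, F i j c) = μ2 * D^(C-1) := by
        intro j hj
        obtain ⟨hne, hjPJ⟩ := Finset.mem_erase.mp hj
        have hjP := (Finset.mem_inter.mp hjPJ).1
        exact hMsame i j (hptu j (pt i) hjP).symm hne
      rw [Finset.sum_congr rfl hval, Finset.sum_const,
        Finset.card_erase_of_mem hiM, hξ (pt i), smul_eq_mul]
    have hinner2 : ∀ c ∈ Finset.univ.erase (pt i),
        (∑ j ∈ P c ∩ J, ∏ c' : Fin C, F i j c') = ξ * (m1 * (m1 * D^(C-2))) := by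
      intro c hc
      have hcne : c ≠ pt i := (Finset.mem_erase.mp hc).1
      have hval : ∀ j ∈ P c ∩ J, (∏ c' : Fin C, F i j c') = m1 * (m1 * D^(C-2)) := by
        intro j hj
        have hjP := (Finset.mem_inter.mp hj).1
        have hptj : pt j = c := (hptu j c hjP).symm
        exact hMcross i j (by rw [hptj]; exact hcne)
      rw [Finset.sum_congr rfl hval, Finset.sum_const, hξ c, smul_eq_mul]
    rw [hinner1, Finset.sum_congr rfl hinner2, Finset.sum_const,
      Finset.card_erase_of_mem (Finset.mem_univ _), Finset.card_univ, Fintype.card_fin,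
      smul_eq_mul, hNval]

  -- Step D : second moment
  have stepD : (∑ Z ∈ Ω, ((Finset.univ.biUnion Z ∩ J).card)^2) = C * ξ * Nval := by
    have e2 : ∀ Z ∈ Ω, ((Finset.univ.biUnion Z ∩ J).card)^2
        = ∑ i ∈ J, ((Finset.univ.biUnion Z ∩ J).card
            * (if i ∈ Finset.univ.biUnion Z then 1 else 0)) := by
      intro Z _
      rw [← Finset.mul_sum, ← hkexp Z, sq]
    rw [Finset.sum_congr rfl e2, Finset.sum_comm,
      Finset.sum_congr rfl (fun i hi => stepC i hi), Finset.sum_const, smul_eq_mul]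
    have hcardJ : J.card = C * ξ := by
      rw [hJdecomp, Finset.card_biUnion
        (fun c _ c' _ hne => (hdisj c c' hne).mono Finset.inter_subset_left
          Finset.inter_subset_left),
        Finset.sum_congr rfl (fun c _ => hξ c), Finset.sum_const, smul_eq_mul,
        Finset.card_univ, Fintype.card_fin]
    rw [hcardJ, mul_assoc]

  -- |Ω| is positive
  have hW : (0:ℝ) < (Ω.card : ℝ) := by
    have h1 : Ω.card = ∏ c : Fin C, ((P c).powersetCard (t+1)).card :=
      Fintype.card_piFinset _
    have h2 : ∀ c : Fin C, 0 < ((P c).powersetCard (t+1)).card := by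
      intro c
      rw [Finset.card_powersetCard, hsize c]
      exact Nat.choose_pos hτs
    have : 0 < Ω.card := by
      rw [h1]; exact Finset.prod_pos (fun c _ => h2 c)
    exact_mod_cast this
  -- final assembly
  set A := ∑ i : Fin n, L i * ‖h i‖ ^ 2 with hA
  have hSk2 : (∑ Z ∈ Ω, (((Finset.univ.biUnion Z ∩ J).card : ℝ)) ^ 2)
      = ((C * ξ * Nval : ℕ) : ℝ) := by
    rw [← stepD, Nat.cast_sum]
    exact Finset.sum_congr rfl (fun Z _ => by push_cast; ring)
  have hsum_ind : ∀ (B' : Finset (Fin n)) (f : Fin n → ℝ),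
      (∑ i ∈ B' ∩ J, f i) = ∑ j ∈ J, (if j ∈ B' then (1:ℝ) else 0) * f j := by
    intro B' f
    rw [show B' ∩ J = J.filter (fun j => j ∈ B') from by ext x; simp [and_comm],
      Finset.sum_filter]
    exact Finset.sum_congr rfl (fun j _ => by by_cases hj : j ∈ B' <;> simp [hj])
  have core : (∑ Z ∈ Ω, φ (fun i => if i ∈ Finset.univ.biUnion Z then h i else 0))
      ≤ ((Nval:ℝ)/2) * A := by
    refine le_trans (Finset.sum_le_sum (fun Z _ => stepA (Finset.univ.biUnion Z))) ?_
    have e3 : ∀ Z ∈ Ω,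
        ((Finset.univ.biUnion Z ∩ J).card : ℝ) / 2
            * ∑ i ∈ Finset.univ.biUnion Z ∩ J, L i * ‖h i‖ ^ 2
          = ∑ j ∈ J, (((Finset.univ.biUnion Z ∩ J).card
              * (if j ∈ Finset.univ.biUnion Z then 1 else 0) : ℕ) : ℝ)
                * (L j * ‖h j‖ ^ 2) / 2 := by
      intro Z _
      rw [hsum_ind (Finset.univ.biUnion Z) (fun j => L j * ‖h j‖ ^ 2), Finset.mul_sum]
      refine Finset.sum_congr rfl (fun j _ => ?_)
      push_cast
      by_cases hj : j ∈ Finset.univ.biUnion Z <;> simp [hj] <;> ring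
    rw [Finset.sum_congr rfl e3, Finset.sum_comm]
    have e4 : ∀ j ∈ J, (∑ Z ∈ Ω, (((Finset.univ.biUnion Z ∩ J).card
        * (if j ∈ Finset.univ.biUnion Z then 1 else 0) : ℕ) : ℝ) * (L j * ‖h j‖ ^ 2) / 2)
        = (Nval:ℝ) * (L j * ‖h j‖ ^ 2) / 2 := by
      intro j hj
      rw [← Finset.sum_div, ← Finset.sum_mul, ← Nat.cast_sum, stepC j hj]
    rw [Finset.sum_congr rfl e4]
    have e5 : (∑ j ∈ J, (Nval:ℝ) * (L j * ‖h j‖ ^ 2) / 2)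
        ≤ ∑ j : Fin n, (Nval:ℝ) * (L j * ‖h j‖ ^ 2) / 2 := by
      refine Finset.sum_le_sum_of_subset_of_nonneg (Finset.subset_univ J) ?_
      intro j _ _
      exact div_nonneg (mul_nonneg (Nat.cast_nonneg _) (ha j)) (by norm_num)
    refine le_trans e5 (le_of_eq ?_)
    rw [hA, Finset.mul_sum]
    exact Finset.sum_congr rfl (fun j _ => by ring)
  rw [hSk2]
  have hC0 : (0:ℝ) < C := by exact_mod_cast hCpos
  have hξpos : 0 < ξ := hξ1
  have hξ0 : (0:ℝ) < ξ := by exact_mod_cast hξpos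
  have hrhs : 1 / (2 * (C:ℝ) * ξ) * (((C * ξ * Nval : ℕ) : ℝ) / (Ω.card:ℝ)) * A
      = ((Nval:ℝ)/2 * A) / (Ω.card:ℝ) := by
    have hgen : ∀ nv w a : ℝ, 0 < w →
        1 / (2 * (C:ℝ) * ξ) * (((C:ℝ) * (ξ:ℝ) * nv) / w) * a = (nv/2 * a) / w := by
      intro nv w a hw
      field_simp
    have hcast : ((C * ξ * Nval : ℕ) : ℝ) = (C:ℝ) * (ξ:ℝ) * (Nval:ℝ) := by
      push_cast
      ring
    rw [hcast]
    exact hgen _ _ _ hW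
  rw [hrhs]
  exact div_le_div_of_nonneg_right core hW.le
end

section
/- Let $\beta = 1 + \frac{(\xi-1)(\tau-1)}{\max\{1,s-1\}} + (C-1)\frac{\xi\tau}{s}$ with integers $C \geq 1$, $s \geq 1$, $1 \leq \tau \leq s$, $1 \leq \xi \leq s$, and let $\eta = \xi/s$. Then $\frac{\beta}{C\tau} \leq \frac{1}{C\tau} + \eta\left(1 - \frac{1}{C\tau}\right)$. -/
/-- Bound on the normalized ESO parameter:
`β / (C τ) ≤ 1/(C τ) + η (1 - 1/(C τ))` where `η = ξ / s`. -/
theorem beta_over_Ctau_bound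
    (C s τ ξ : ℕ) (hC : 1 ≤ C) (hs : 1 ≤ s) (hτ1 : 1 ≤ τ) (hτs : τ ≤ s)
    (hξ1 : 1 ≤ ξ) (hξs : ξ ≤ s) :
    (1 + ((ξ : ℝ) - 1) * ((τ : ℝ) - 1) / max 1 ((s : ℝ) - 1)
        + ((C : ℝ) - 1) * ((ξ : ℝ) * τ / s)) / ((C : ℝ) * τ)
      ≤ 1 / ((C : ℝ) * τ) + (ξ : ℝ) / s * (1 - 1 / ((C : ℝ) * τ)) := by
  have hC' : (1:ℝ) ≤ C := by exact_mod_cast hC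
  have hs' : (1:ℝ) ≤ s := by exact_mod_cast hs
  have hτ' : (1:ℝ) ≤ τ := by exact_mod_cast hτ1
  have hτs' : (τ:ℝ) ≤ s := by exact_mod_cast hτs
  have hξ' : (1:ℝ) ≤ ξ := by exact_mod_cast hξ1
  have hξs' : (ξ:ℝ) ≤ s := by exact_mod_cast hξs
  have hCτ : (0:ℝ) < (C:ℝ) * τ := by positivity
  have hs0 : (0:ℝ) < s := by linarith
  rcases eq_or_lt_of_le hs' with h1 | h2
  · -- s = 1, hence τ = ξ = 1
    have hτ1' : (τ:ℝ) = 1 := le_antisymm (by linarith) hτ'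
    have hξ1' : (ξ:ℝ) = 1 := le_antisymm (by linarith) hξ'
    have hs1 : (s:ℝ) = 1 := h1.symm
    rw [hτ1', hξ1', hs1]
    have hC0 : (0:ℝ) < C := by linarith
    norm_num
    rw [div_le_iff₀ hC0]
    ring_nf
    nlinarith
  · -- s ≥ 2
    have hs2 : (2:ℝ) ≤ s := by
      have : 1 < s := by exact_mod_cast h2
      exact_mod_cast this
    have hmax : max 1 ((s:ℝ) - 1) = (s:ℝ) - 1 := max_eq_right (by linarith)
    rw [hmax, div_le_iff₀ hCτ]
    have hsm1 : (0:ℝ) < (s:ℝ) - 1 := by linarith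
    have key : ((τ:ℝ) - 1) * ((s:ℝ) - ξ) ≥ 0 :=
      mul_nonneg (by linarith) (by linarith)
    rw [ge_iff_le] at key
    field_simp
    nlinarith [mul_nonneg (mul_nonneg (sub_nonneg.2 hτ') (sub_nonneg.2 hξs')) (sub_nonneg.2 hC'), mul_nonneg key hCτ.le, mul_pos hsm1 hs0, mul_nonneg (mul_nonneg key hsm1.le) hCτ.le]
end

section
/- Fix integers $n \geq 2$, $2 \leq \omega \leq n$, $C \geq 1$ dividing $n$ with $s = n/C \geq 2$, and $1 \leq \tau \leq s$. Define, for $\xi$ with $\omega/C \leq \xi \leq \omega$, $\beta_1(\xi) = 1 + \frac{(\xi-1)(\tau-1)}{s-1} + (C-1)\frac{\xi\tau}{s}$ and $\beta_2 = 1 + \frac{(\omega-1)(C\tau-1)}{n-1}$. Then $\beta_1(\xi)/\beta_2$ is increasing in $\xi$, and consequently $\frac{1 + \frac{(\omega-C)(\tau-1)}{n-C} + (C-1)\frac{\omega\tau}{n}}{\beta_2} \leq \frac{\beta_1(\xi)}{\beta_2} \leq \frac{1 + \frac{(\omega-1)(C\tau-C)}{n-C} + (C-1)\frac{\omega C\tau}{n}}{\beta_2}$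 (using $\omega/C \leq \xi \leq \omega$). -/
set_option maxHeartbeats 1000000


/-- The ratio `β₁(ξ)/β₂` between the ESO parameter of a `C`-computer distributed sampling
(per-part degree `ξ`) and the ESO parameter of a single computer updating `C τ` blocks is
increasing in `ξ ∈ [ω/C, ω]`, and hence lies between the bounds LB and UB obtained by
substituting `ξ = ω/C` and `ξ = ω`. -/
theorem beta_ratio_bounds
    (n ω C s τ : ℕ) (hn : 2 ≤ n) (hω2 : 2 ≤ ω) (hωn : ω ≤ n)
    (hC : 1 ≤ C) (hns : n = C * s) (hs : 2 ≤ s) (hτ1 : 1 ≤ τ) (hτs : τ ≤ s) :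
    let β₁ : ℝ → ℝ := fun ξ =>
      1 + (ξ - 1) * ((τ : ℝ) - 1) / ((s : ℝ) - 1) + ((C : ℝ) - 1) * (ξ * τ / s)
    let β₂ : ℝ := 1 + ((ω : ℝ) - 1) * ((C : ℝ) * τ - 1) / ((n : ℝ) - 1)
    (∀ ξa ξb : ℝ, (ω : ℝ) / C ≤ ξa → ξa ≤ ξb → ξb ≤ (ω : ℝ) →
        β₁ ξa / β₂ ≤ β₁ ξb / β₂) ∧
    (∀ ξ : ℝ, (ω : ℝ) / C ≤ ξ → ξ ≤ (ω : ℝ) →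
      (1 + ((ω : ℝ) - C) * ((τ : ℝ) - 1) / ((n : ℝ) - C)
          + ((C : ℝ) - 1) * ((ω : ℝ) * τ / n)) / β₂ ≤ β₁ ξ / β₂ ∧
      β₁ ξ / β₂ ≤ (1 + ((ω : ℝ) - 1) * ((C : ℝ) * τ - C) / ((n : ℝ) - C)
          + ((C : ℝ) - 1) * ((ω : ℝ) * C * τ / n)) / β₂) := by
  intro β₁ β₂
  have hC1 : (1:ℝ) ≤ C := by exact_mod_cast hC
  have hCpos : (0:ℝ) < C := by linarith
  have hs2 : (2:ℝ) ≤ s := by exact_mod_cast hs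
  have hs1 : (0:ℝ) < (s:ℝ) - 1 := by linarith
  have hspos : (0:ℝ) < s := by linarith
  have hτ1' : (1:ℝ) ≤ τ := by exact_mod_cast hτ1
  have hn2 : (2:ℝ) ≤ n := by exact_mod_cast hn
  have hn1 : (0:ℝ) < (n:ℝ) - 1 := by linarith
  have hω1 : (1:ℝ) ≤ ω := by
    have : (2:ℝ) ≤ ω := by exact_mod_cast hω2
    linarith
  have hnCs : (n:ℝ) = C * s := by exact_mod_cast hns
  have hnC : (0:ℝ) < (n:ℝ) - C := by rw [hnCs]; nlinarith
  have hnpos : (0:ℝ) < n := by linarith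
  have hCτ : (1:ℝ) ≤ (C:ℝ) * τ := by nlinarith
  have hβ₂ : 0 < β₂ := by
    have h3 : (0:ℝ) ≤ ((ω:ℝ) - 1) * ((C:ℝ) * τ - 1) / ((n:ℝ) - 1) :=
      div_nonneg (mul_nonneg (by linarith) (by linarith)) (by linarith)
    simp only [β₂]; linarith
  have hmono : ∀ ξa ξb : ℝ, ξa ≤ ξb → β₁ ξa ≤ β₁ ξb := by
    intro ξa ξb h
    simp only [β₁]
    have hslope : (0:ℝ) ≤ ((τ:ℝ) - 1) / ((s:ℝ) - 1) + ((C:ℝ) - 1) * τ / s := by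
      have e1 := div_nonneg (by linarith : (0:ℝ) ≤ (τ:ℝ) - 1) (le_of_lt hs1)
      have e3 := div_nonneg (mul_nonneg (by linarith : (0:ℝ) ≤ (C:ℝ) - 1)
        (by linarith : (0:ℝ) ≤ (τ:ℝ))) (le_of_lt hspos)
      linarith
    have key : (1 + (ξb - 1) * ((τ:ℝ) - 1) / ((s:ℝ) - 1) + ((C:ℝ) - 1) * (ξb * τ / s))
        - (1 + (ξa - 1) * ((τ:ℝ) - 1) / ((s:ℝ) - 1) + ((C:ℝ) - 1) * (ξa * τ / s))
        = (ξb - ξa) * (((τ:ℝ) - 1) / ((s:ℝ) - 1) + ((C:ℝ) - 1) * τ / s) := by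
      field_simp
      ring
    linarith [key, mul_nonneg (sub_nonneg.2 h) hslope]
  have hdiv : ∀ a b : ℝ, a ≤ b → a / β₂ ≤ b / β₂ := fun a b hab =>
    div_le_div_of_nonneg_right hab hβ₂.le
  have hC0 : (C:ℝ) ≠ 0 := ne_of_gt hCpos
  have hs0 : (s:ℝ) ≠ 0 := ne_of_gt hspos
  have hs10 : (s:ℝ) - 1 ≠ 0 := ne_of_gt hs1
  have hCsC : (C:ℝ) * s - C ≠ 0 := by nlinarith
  have hLB : 1 + ((ω:ℝ) - C) * ((τ:ℝ) - 1) / ((n:ℝ) - C)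
      + ((C:ℝ) - 1) * ((ω:ℝ) * τ / n) = β₁ ((ω:ℝ) / C) := by
    simp only [β₁]
    rw [hnCs]
    field_simp
  have hUB : 1 + ((ω:ℝ) - 1) * ((C:ℝ) * τ - C) / ((n:ℝ) - C)
      + ((C:ℝ) - 1) * ((ω:ℝ) * C * τ / n) = β₁ (ω:ℝ) := by
    simp only [β₁]
    rw [hnCs]
    field_simp
  refine ⟨fun ξa ξb _ hab _ => hdiv _ _ (hmono _ _ hab), fun ξ h1 h2 => ?_⟩
  exact ⟨hLB ▸ hdiv _ _ (hmono _ _ h1), hUB ▸ hdiv _ _ (hmono _ _ h2)⟩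
end
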